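/- Let τ > 0, β ≥ 0, p > 2 and q with 1/p + 1/q = 1. Then ∫₀^∞ e^{−vτ} v^{1/p − 1/2} |v − β|^{1/q − 1} dv ≲ τ^{−1/2}, with implied constant depending only on p (and uniform in β ≥ 0). -/

import Mathlib

open MeasureTheory

section AuxLaplace

open Set Real intervalIntegral

set_option maxHeartbeats 2000000 in
lemma aux_laplace (a b : ℝ) (ha0 : -(1/2) < a) (ha1 : a < 0) (hb0 : -(1/2) < b) (hb1 : b < 0)
    (hab : a + b = -(1/2)) :
    ∃ C : ℝ, 0 < C ∧ ∀ τ : ℝ, 0 < τ → ∀ β : ℝ, 0 ≤ β →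
      (∫ v in Set.Ioi (0 : ℝ),
        Real.exp (-(v * τ)) * v ^ a * |v - β| ^ b)
      ≤ C * τ ^ (-(1 / 2) : ℝ) := by
  have ha1' : (0:ℝ) < a + 1 := by linarith
  have hb1' : (0:ℝ) < b + 1 := by linarith
  have hΓ : 0 < Real.Gamma (a + 1) := Real.Gamma_pos_of_pos ha1'
  refine ⟨Real.Gamma (a+1) + 1/(a+1) + 1/(b+1) + Real.sqrt π, by positivity, ?_⟩
  intro τ hτ β hβ
  set r : ℝ := τ ^ (-(1 / 2) : ℝ) with hr_def
  have hr_pos : 0 < r := Real.rpow_pos_of_pos hτ _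
  have hr_eq : (1/τ) ^ ((1:ℝ)/2) = r := by
    rw [one_div, Real.inv_rpow hτ.le, ← Real.rpow_neg hτ.le]
  set f : ℝ → ℝ := fun v => Real.exp (-(v * τ)) * v ^ a * |v - β| ^ b with hf_def
  set g1 : ℝ → ℝ := fun v => (β/2) ^ b * (v ^ a * Real.exp (-(τ * v))) with hg1_def
  set g2 : ℝ → ℝ := fun v => (β/2) ^ a * Real.exp (-(τ * (β/2))) * (β - v) ^ b with hg2_def
  set g3 : ℝ → ℝ := fun v => (v - β) ^ (-(1/2) : ℝ) * Real.exp (-(τ * (v - β))) with hg3_def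
  set g0 : ℝ → ℝ := fun u => u ^ (-(1/2) : ℝ) * Real.exp (-(τ * u)) with hg0_def
  -- integrability facts
  have hGa : IntegrableOn (fun v : ℝ => v ^ a * Real.exp (-(τ * v))) (Ioi 0) := by
    have := integrableOn_rpow_mul_exp_neg_mul_rpow (by linarith : (-1:ℝ) < a) (zero_lt_one : (0:ℝ) < 1) hτ
    simpa [Real.rpow_one, neg_mul] using this
  have hGhalf : IntegrableOn g0 (Ioi 0) := by
    have := integrableOn_rpow_mul_exp_neg_mul_rpow
      (by norm_num : (-1:ℝ) < -(1/2)) (zero_lt_one : (0:ℝ) < 1) hτ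
    simpa [Real.rpow_one, neg_mul, hg0_def] using this
  have hint_a : ∫ v in Ioi (0:ℝ), v ^ a * Real.exp (-(τ * v))
      = (1/τ) ^ (a+1) * Real.Gamma (a+1) := by
    have := Real.integral_rpow_mul_exp_neg_mul_Ioi ha1' hτ
    simpa [add_sub_cancel_right] using this
  have hint_half : ∫ u in Ioi (0:ℝ), g0 u = (1/τ) ^ ((1:ℝ)/2) * Real.sqrt π := by
    have := Real.integral_rpow_mul_exp_neg_mul_Ioi (by norm_num : (0:ℝ) < 1/2) hτ
    rw [← Real.Gamma_one_half_eq]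
    rw [← this]
    refine setIntegral_congr_fun measurableSet_Ioi (fun u hu => ?_)
    norm_num [hg0_def]
  -- the three indicator pieces
  set G1 : ℝ → ℝ := (Ioc 0 (β/2)).indicator g1 with hG1_def
  set G2 : ℝ → ℝ := (Ioc (β/2) β).indicator g2 with hG2_def
  set G3 : ℝ → ℝ := (Ioi β).indicator g3 with hG3_def
  have hI1 : IntegrableOn g1 (Ioc 0 (β/2)) := by
    exact (hGa.mono_set Ioc_subset_Ioi_self).const_mul _
  have hI2 : IntegrableOn g2 (Ioc (β/2) β) := by
    have h0 : IntervalIntegrable (fun u : ℝ => u ^ b) volume 0 (β/2) :=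
      intervalIntegrable_rpow' (by linarith)
    have h1 : IntervalIntegrable (fun v : ℝ => (β - v) ^ b) volume (β - 0) (β - β/2) :=
      h0.comp_sub_left β
    have h2 : IntervalIntegrable (fun v : ℝ => (β - v) ^ b) volume (β/2) β := by
      have hh := h1.symm
      rw [show β - β/2 = β/2 by ring, show β - 0 = β by ring] at hh
      exact hh
    have h3 : IntegrableOn (fun v : ℝ => (β - v) ^ b) (Ioc (β/2) β) := by
      rw [intervalIntegrable_iff_integrableOn_Ioc_of_le (by linarith)] at h2
      exact h2
    exact h3.const_mul _
  have heq3 : G3 = fun v => (Ioi (0:ℝ)).indicator g0 (v - β) := by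
    funext v
    simp only [hG3_def, Set.indicator_apply, mem_Ioi, sub_pos, hg3_def, hg0_def]
  have hI3 : Integrable G3 := by
    rw [heq3]
    exact ((integrable_indicator_iff measurableSet_Ioi).2 hGhalf).comp_sub_right β
  have hIG1 : Integrable G1 := (integrable_indicator_iff measurableSet_Ioc).2 hI1
  have hIG2 : Integrable G2 := (integrable_indicator_iff measurableSet_Ioc).2 hI2
  -- nonnegativity of pieces
  have hG1nn : ∀ v, 0 ≤ G1 v := by
    intro v
    apply Set.indicator_nonneg
    intro x hx
    have h0 : (0:ℝ) ≤ β/2 := by linarith [hx.1.le.trans hx.2]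
    have h0' : (0:ℝ) ≤ x := hx.1.le
    simp only [hg1_def]
    positivity
  have hG2nn : ∀ v, 0 ≤ G2 v := by
    intro v
    apply Set.indicator_nonneg
    intro x hx
    have h1 : (0:ℝ) ≤ β/2 := by linarith
    have h2 : (0:ℝ) ≤ β - x := by linarith [hx.2]
    simp only [hg2_def]
    positivity
  have hG3nn : ∀ v, 0 ≤ G3 v := by
    intro v
    apply Set.indicator_nonneg
    intro x hx
    have : (0:ℝ) ≤ x - β := by simp only [mem_Ioi] at hx; linarith
    simp only [hg3_def]
    positivity
  -- pointwise bound
  have hfg : ∀ v ∈ Ioi (0:ℝ), f v ≤ G1 v + G2 v + G3 v := by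
    intro v hv
    simp only [mem_Ioi] at hv
    rcases le_or_gt v (β/2) with h1 | h1
    · -- v ∈ Ioc 0 (β/2)
      have hm : v ∈ Ioc 0 (β/2) := ⟨hv, h1⟩
      have hβ2 : 0 < β/2 := lt_of_lt_of_le hv h1
      have habs : |v - β| = β - v := by
        rw [abs_of_nonpos (by linarith)]; ring
      have hkey : f v ≤ g1 v := by
        have hle : (β - v) ^ b ≤ (β/2) ^ b :=
          Real.rpow_le_rpow_of_nonpos hβ2 (by linarith) hb1.le
        have hnn : 0 ≤ Real.exp (-(v * τ)) * v ^ a := by positivity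
        calc f v = Real.exp (-(v * τ)) * v ^ a * (β - v) ^ b := by
              simp only [hf_def, habs]
          _ ≤ Real.exp (-(v * τ)) * v ^ a * (β/2) ^ b :=
              mul_le_mul_of_nonneg_left hle hnn
          _ = g1 v := by simp only [hg1_def]; rw [mul_comm v τ]; ring
      have := (Set.indicator_of_mem hm g1)
      have h2 := hG2nn v; have h3 := hG3nn v
      rw [hG1_def]
      linarith [hkey, this.ge, this.le]
    · rcases le_or_gt v β with h2 | h2
      · -- v ∈ Ioc (β/2) β
        have hm : v ∈ Ioc (β/2) β := ⟨h1, h2⟩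
        have hβ2 : 0 < β/2 := by
          rcases lt_or_ge 0 (β/2) with h | h
          · exact h
          · exfalso; linarith
        have habs : |v - β| = β - v := by
          rw [abs_of_nonpos (by linarith)]; ring
        have hkey : f v ≤ g2 v := by
          have hbv : 0 ≤ (β - v) ^ b := Real.rpow_nonneg (by linarith) _
          have hexp : Real.exp (-(v * τ)) ≤ Real.exp (-(τ * (β/2))) := by
            apply Real.exp_le_exp.2
            nlinarith
          have hva : v ^ a ≤ (β/2) ^ a :=
            Real.rpow_le_rpow_of_nonpos hβ2 h1.le ha1.le
          have : Real.exp (-(v * τ)) * v ^ a ≤ (β/2) ^ a * Real.exp (-(τ * (β/2))) := by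
            rw [mul_comm ((β/2 : ℝ) ^ a)]
            exact mul_le_mul hexp hva (Real.rpow_nonneg hv.le _) (Real.exp_pos _).le
          calc f v = Real.exp (-(v * τ)) * v ^ a * (β - v) ^ b := by
                simp only [hf_def, habs]
            _ ≤ (β/2) ^ a * Real.exp (-(τ * (β/2))) * (β - v) ^ b :=
                mul_le_mul_of_nonneg_right this hbv
            _ = g2 v := rfl
        have := Set.indicator_of_mem hm g2
        have hh1 := hG1nn v; have hh3 := hG3nn v
        rw [hG2_def]
        linarith [hkey, this.ge, this.le]
      · -- v ∈ Ioi β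
        have hm : v ∈ Ioi β := h2
        have hvb : 0 < v - β := by linarith
        have habs : |v - β| = v - β := abs_of_pos hvb
        have hkey : f v ≤ g3 v := by
          have hexp : Real.exp (-(v * τ)) ≤ Real.exp (-(τ * (v - β))) := by
            apply Real.exp_le_exp.2
            nlinarith
          have hva : v ^ a ≤ (v - β) ^ a :=
            Real.rpow_le_rpow_of_nonpos hvb (by linarith) ha1.le
          have h4 : Real.exp (-(v * τ)) * v ^ a ≤ (v - β) ^ a * Real.exp (-(τ * (v - β))) := by
            rw [mul_comm ((v - β : ℝ) ^ a)]
            exact mul_le_mul hexp hva (Real.rpow_nonneg hv.le _) (Real.exp_pos _).le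
          have h5 : (v - β) ^ a * (v - β) ^ b = (v - β) ^ (-(1/2):ℝ) := by
            rw [← Real.rpow_add hvb, hab]
          calc f v = Real.exp (-(v * τ)) * v ^ a * (v - β) ^ b := by
                simp only [hf_def, habs]
            _ ≤ (v - β) ^ a * Real.exp (-(τ * (v - β))) * (v - β) ^ b :=
                mul_le_mul_of_nonneg_right h4 (Real.rpow_nonneg hvb.le _)
            _ = g3 v := by simp only [hg3_def]; rw [← h5]; ring
        have := Set.indicator_of_mem hm g3
        have hh1 := hG1nn v; have hh2 := hG2nn v
        rw [hG3_def]
        linarith [hkey, this.ge, this.le]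
  -- main comparison
  have hmain : (∫ v in Ioi (0:ℝ), f v) ≤ ∫ v in Ioi (0:ℝ), (G1 v + G2 v + G3 v) := by
    apply integral_mono_of_nonneg
    · refine (ae_restrict_iff' measurableSet_Ioi).2 (Filter.Eventually.of_forall fun v hv => ?_)
      simp only [mem_Ioi] at hv
      have h1 : (0:ℝ) ≤ v ^ a := Real.rpow_nonneg hv.le _
      have h2 : (0:ℝ) ≤ |v - β| ^ b := Real.rpow_nonneg (abs_nonneg _) _
      positivity
    · exact ((hIG1.add hIG2).add hI3).restrict
    · exact (ae_restrict_iff' measurableSet_Ioi).2 (Filter.Eventually.of_forall hfg)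
  -- split the integral
  have hsplit : (∫ v in Ioi (0:ℝ), (G1 v + G2 v + G3 v))
      = (∫ v in Ioc 0 (β/2), g1 v) + (∫ v in Ioc (β/2) β, g2 v) + (∫ v in Ioi β, g3 v) := by
    have hI12 : Integrable (fun v => G1 v + G2 v) (volume.restrict (Ioi 0)) :=
      (hIG1.restrict).add (hIG2.restrict)
    rw [integral_add hI12 (hI3.restrict), integral_add (hIG1.restrict) (hIG2.restrict)]
    congr 1
    congr 1
    · rw [hG1_def, setIntegral_indicator measurableSet_Ioc,
        Set.inter_eq_self_of_subset_right Ioc_subset_Ioi_self]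
    · have hsub2 : Ioc (β/2) β ⊆ Ioi (0:ℝ) := fun x hx =>
        mem_Ioi.mpr (lt_of_le_of_lt (by linarith : (0:ℝ) ≤ β/2) (mem_Ioc.mp hx).1)
      rw [hG2_def, setIntegral_indicator measurableSet_Ioc,
        Set.inter_eq_self_of_subset_right hsub2]
    · rw [hG3_def, setIntegral_indicator measurableSet_Ioi,
        Set.inter_eq_self_of_subset_right (Ioi_subset_Ioi hβ)]
  -- bound T1
  have hT1 : (∫ v in Ioc 0 (β/2), g1 v) ≤ (Real.Gamma (a+1) + 1/(a+1)) * r := by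
    have hpull : (∫ v in Ioc 0 (β/2), g1 v)
        = (β/2) ^ b * ∫ v in Ioc 0 (β/2), v ^ a * Real.exp (-(τ * v)) := by
      rw [hg1_def, MeasureTheory.integral_const_mul]
    rcases le_or_gt (β * τ) 2 with hc | hc
    · -- small case: bound exp by 1
      have hstep : (∫ v in Ioc 0 (β/2), v ^ a * Real.exp (-(τ * v)))
          ≤ ∫ v in Ioc 0 (β/2), v ^ a := by
        apply setIntegral_mono_on (hGa.mono_set Ioc_subset_Ioi_self)
        · rw [← intervalIntegrable_iff_integrableOn_Ioc_of_le (by linarith : (0:ℝ) ≤ β/2)]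
          exact intervalIntegrable_rpow' (by linarith)
        · exact measurableSet_Ioc
        · intro v hv
          have : Real.exp (-(τ * v)) ≤ 1 := by
            rw [Real.exp_le_one_iff]
            nlinarith [hv.1]
          nlinarith [Real.rpow_nonneg hv.1.le a, this]
      have hval : (∫ v in Ioc 0 (β/2), v ^ a) = (β/2) ^ (a+1) / (a+1) := by
        rw [← intervalIntegral.integral_of_le (by linarith : (0:ℝ) ≤ β/2),
          integral_rpow (Or.inl (by linarith : (-1:ℝ) < a)),
          Real.zero_rpow (by linarith : a + 1 ≠ 0), sub_zero]
      have hcomb : (β/2) ^ b * ((β/2) ^ (a+1) / (a+1)) = (β/2) ^ ((1:ℝ)/2) / (a+1) := by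
        rw [mul_div_assoc', ← Real.rpow_add' (by linarith) (by rw [show b + (a+1) = (1:ℝ)/2 by linarith]; norm_num),
          show b + (a+1) = (1:ℝ)/2 by linarith]
      have hle5 : (β/2) ^ ((1:ℝ)/2) ≤ r := by
        rw [← hr_eq]
        apply Real.rpow_le_rpow (by linarith) _ (by norm_num)
        rw [div_le_div_iff₀ (by norm_num) hτ]
        nlinarith
      have : (∫ v in Ioc 0 (β/2), g1 v) ≤ (β/2) ^ ((1:ℝ)/2) / (a+1) := by
        rw [hpull, ← hcomb]
        exact mul_le_mul_of_nonneg_left hstep (Real.rpow_nonneg (by linarith) _) |>.trans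
          (by rw [hval])
      calc (∫ v in Ioc 0 (β/2), g1 v) ≤ (β/2) ^ ((1:ℝ)/2) / (a+1) := this
        _ ≤ r / (a+1) := by gcongr
        _ = (1/(a+1)) * r := by ring
        _ ≤ (Real.Gamma (a+1) + 1/(a+1)) * r := by nlinarith [hΓ, hr_pos]
    · -- large case: use Gamma bound
      have hstep : (∫ v in Ioc 0 (β/2), v ^ a * Real.exp (-(τ * v)))
          ≤ ∫ v in Ioi 0, v ^ a * Real.exp (-(τ * v)) := by
        apply setIntegral_mono_set hGa
        · refine (ae_restrict_iff' measurableSet_Ioi).2 (Filter.Eventually.of_forall fun v hv => ?_)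
          simp only [mem_Ioi] at hv
          positivity
        · exact HasSubset.Subset.eventuallyLE Ioc_subset_Ioi_self
      have hβ2pos : 0 < β/2 := by nlinarith
      have hbb : (β/2) ^ b ≤ (1/τ) ^ b := by
        apply Real.rpow_le_rpow_of_nonpos (by positivity) _ hb1.le
        rw [div_le_div_iff₀ hτ (by norm_num)]
        nlinarith
      have hnn2 : 0 ≤ (1/τ) ^ (a+1) * Real.Gamma (a+1) := by positivity
      calc (∫ v in Ioc 0 (β/2), g1 v)
          ≤ (β/2) ^ b * ((1/τ) ^ (a+1) * Real.Gamma (a+1)) := by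
            rw [hpull, ← hint_a]
            exact mul_le_mul_of_nonneg_left hstep (Real.rpow_nonneg (by linarith) _)
        _ ≤ (1/τ) ^ b * ((1/τ) ^ (a+1) * Real.Gamma (a+1)) :=
            mul_le_mul_of_nonneg_right hbb hnn2
        _ = (1/τ) ^ (b + (a+1)) * Real.Gamma (a+1) := by
            rw [Real.rpow_add (show (0:ℝ) < 1/τ by positivity) b (a+1), mul_assoc]
        _ = r * Real.Gamma (a+1) := by
            rw [show b + (a+1) = (1:ℝ)/2 by linarith, hr_eq]
        _ = Real.Gamma (a+1) * r := by ring
        _ ≤ (Real.Gamma (a+1) + 1/(a+1)) * r := by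
            nlinarith [mul_pos (show (0:ℝ) < 1/(a+1) by positivity) hr_pos]
  -- bound T2
  have hT2 : (∫ v in Ioc (β/2) β, g2 v) ≤ (1/(b+1)) * r := by
    have hval : (∫ v in Ioc (β/2) β, (fun v => (β - v) ^ b) v) = (β/2) ^ (b+1) / (b+1) := by
      rw [← intervalIntegral.integral_of_le (by linarith : β/2 ≤ β),
        intervalIntegral.integral_comp_sub_left (fun u : ℝ => u ^ b) β]
      have e1 : β - β = 0 := by ring
      have e2 : β - β/2 = β/2 := by ring
      rw [e1, e2, integral_rpow (Or.inl (by linarith : (-1:ℝ) < b)),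
        Real.zero_rpow (by linarith : b + 1 ≠ 0), sub_zero]
    have hpull : (∫ v in Ioc (β/2) β, g2 v)
        = (β/2) ^ a * Real.exp (-(τ * (β/2))) * ((β/2) ^ (b+1) / (b+1)) := by
      rw [hg2_def, MeasureTheory.integral_const_mul, hval]
    have hsum : a + (b+1) = (1:ℝ)/2 := by linarith
    have hpow : (β/2 : ℝ) ^ ((1:ℝ)/2) = (β/2) ^ a * (β/2) ^ (b+1) := by
      rw [← hsum, Real.rpow_add' (by linarith : (0:ℝ) ≤ β/2) (by rw [hsum]; norm_num)]
    have hcomb : (β/2) ^ a * Real.exp (-(τ * (β/2))) * ((β/2) ^ (b+1) / (b+1))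
        = Real.exp (-(τ * (β/2))) * (β/2) ^ ((1:ℝ)/2) * (1/(b+1)) := by
      rw [hpow]; ring
    have hkey : Real.exp (-(τ * (β/2))) * (β/2) ^ ((1:ℝ)/2) ≤ r := by
      set x : ℝ := τ * (β/2) with hx_def
      have hx : 0 ≤ x := by positivity
      have hsplit2 : (β/2 : ℝ) = x * (1/τ) := by
        rw [hx_def]; field_simp
      have h1 : (β/2 : ℝ) ^ ((1:ℝ)/2) = x ^ ((1:ℝ)/2) * (1/τ) ^ ((1:ℝ)/2) := by
        rw [hsplit2, Real.mul_rpow hx (by positivity)]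
      have h2 : x ^ ((1:ℝ)/2) ≤ Real.exp x := by
        rcases le_total x 1 with h | h
        · calc x ^ ((1:ℝ)/2) ≤ 1 := Real.rpow_le_one hx h (by norm_num)
            _ ≤ Real.exp x := by
              rw [← Real.exp_zero]; exact Real.exp_le_exp.2 hx
        · calc x ^ ((1:ℝ)/2) ≤ x ^ (1:ℝ) :=
              Real.rpow_le_rpow_of_exponent_le h (by norm_num)
            _ = x := Real.rpow_one x
            _ ≤ Real.exp x := by linarith [Real.add_one_le_exp x]
      have h3 : Real.exp (-x) * x ^ ((1:ℝ)/2) ≤ 1 := by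
        have := mul_le_mul_of_nonneg_left h2 (Real.exp_pos (-x)).le
        rwa [← Real.exp_add, neg_add_cancel, Real.exp_zero] at this
      calc Real.exp (-x) * (β/2) ^ ((1:ℝ)/2)
          = (Real.exp (-x) * x ^ ((1:ℝ)/2)) * (1/τ) ^ ((1:ℝ)/2) := by rw [h1]; ring
        _ ≤ 1 * (1/τ) ^ ((1:ℝ)/2) :=
            mul_le_mul_of_nonneg_right h3 (Real.rpow_nonneg (by positivity) _)
        _ = r := by rw [one_mul, hr_eq]
    calc (∫ v in Ioc (β/2) β, g2 v)
        = Real.exp (-(τ * (β/2))) * (β/2) ^ ((1:ℝ)/2) * (1/(b+1)) := by rw [hpull, hcomb]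
      _ ≤ r * (1/(b+1)) := by
          apply mul_le_mul_of_nonneg_right hkey
          positivity
      _ = (1/(b+1)) * r := by ring
  -- bound T3
  have hT3 : (∫ v in Ioi β, g3 v) = Real.sqrt π * r := by
    have h1 : (∫ v in Ioi β, g3 v) = ∫ v, G3 v := by
      rw [hG3_def, MeasureTheory.integral_indicator measurableSet_Ioi]
    have h2 : (∫ v, G3 v) = ∫ u in Ioi (0:ℝ), g0 u := by
      rw [heq3, integral_sub_right_eq_self (fun v => (Ioi (0:ℝ)).indicator g0 v) β,
        MeasureTheory.integral_indicator measurableSet_Ioi]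
    rw [h1, h2, hint_half, hr_eq, mul_comm]
  calc (∫ v in Ioi (0:ℝ), f v) ≤ _ := hmain
    _ = (∫ v in Ioc 0 (β/2), g1 v) + (∫ v in Ioc (β/2) β, g2 v) + (∫ v in Ioi β, g3 v) := hsplit
    _ ≤ (Real.Gamma (a+1) + 1/(a+1)) * r + (1/(b+1)) * r + Real.sqrt π * r := by
        linarith [hT1, hT2, hT3.le]
    _ = (Real.Gamma (a+1) + 1/(a+1) + 1/(b+1) + Real.sqrt π) * r := by ring

end AuxLaplace

/-- Singular-weight Laplace integral estimate: for `p > 2`, `1/p + 1/q = 1`,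
`∫₀^∞ e^{−vτ} v^{1/p − 1/2} |v − β|^{1/q − 1} dv ≲ τ^{−1/2}` with constant
depending only on `p`, uniformly in `β ≥ 0`. -/
theorem stmt_18 (p q : ℝ) (hp : 2 < p) (hpq : 1 / p + 1 / q = 1) :
    ∃ C : ℝ, 0 < C ∧ ∀ τ : ℝ, 0 < τ → ∀ β : ℝ, 0 ≤ β →
      (∫ v in Set.Ioi (0 : ℝ),
        Real.exp (-(v * τ)) * v ^ (1 / p - 1 / 2) * |v - β| ^ (1 / q - 1))
      ≤ C * τ ^ (-(1 / 2) : ℝ) := by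
  have hp0 : (0:ℝ) < p := by linarith
  have h1p : (0:ℝ) < 1/p := by positivity
  have h2p : 1/p < 1/2 := by rw [div_lt_div_iff₀ hp0 (by norm_num : (0:ℝ) < 2)]; linarith
  have hqp : 1/q - 1 = -(1/p) := by linarith
  exact aux_laplace (1/p - 1/2) (1/q - 1) (by linarith) (by linarith) (by linarith)
    (by linarith) (by linarith)
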